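/- arXiv:1305.1363 — 2 statements merged into one kernel-verified Lean document; each statement's English description precedes it below -/
import Mathlib

section
/- For the square loss ℓ(t) = (1-t)², with two instances x₁, x₂ having conditional probabilities ξ₁ = P(y=+1|x₁), ξ₂ = P(y=+1|x₂) and marginal probabilities p₁, p₂ > 0, any minimizer (f₁, f₂) ∈ ℝ² of the expected pairwise risk R(f) = p₁p₂[ξ₁(1-ξ₂)(1-(f₁-f₂))² + ξ₂(1-ξ₁)(1-(f₂-f₁))²] satisfies sign(f₁ - f₂) = sign(ξ₁ - ξ₂) whenever ξ₁ ≠ ξ₂ and ξ₁(1-ξ₂) + ξ₂(1-ξ₁) > 0. -/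
/-- AUC consistency of the square loss on a two-point instance space: any minimizer
(f₁, f₂) of the expected pairwise square-loss risk satisfies
sign(f₁ - f₂) = sign(ξ₁ - ξ₂) whenever ξ₁ ≠ ξ₂ and ξ₁(1-ξ₂) + ξ₂(1-ξ₁) > 0. -/
theorem square_loss_two_point_consistency (ξ₁ ξ₂ p₁ p₂ f₁ f₂ : ℝ)
    (h₁ : ξ₁ ∈ Set.Icc (0 : ℝ) 1) (h₂ : ξ₂ ∈ Set.Icc (0 : ℝ) 1)
    (hp₁ : 0 < p₁) (hp₂ : 0 < p₂)
    (R : ℝ → ℝ → ℝ)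
    (hR : ∀ g₁ g₂ : ℝ, R g₁ g₂ =
      p₁ * p₂ * (ξ₁ * (1 - ξ₂) * (1 - (g₁ - g₂)) ^ 2 + ξ₂ * (1 - ξ₁) * (1 - (g₂ - g₁)) ^ 2))
    (hmin : ∀ g₁ g₂ : ℝ, R f₁ f₂ ≤ R g₁ g₂)
    (hne : ξ₁ ≠ ξ₂) (hpos : 0 < ξ₁ * (1 - ξ₂) + ξ₂ * (1 - ξ₁)) :
    Real.sign (f₁ - f₂) = Real.sign (ξ₁ - ξ₂) := by
  set a := ξ₁ * (1 - ξ₂) with ha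
  set b := ξ₂ * (1 - ξ₁) with hb
  set s := a + b with hs
  have hsne : s ≠ 0 := ne_of_gt hpos
  set t := (a - b) / s with htdef
  have hts : t * s = a - b := div_mul_cancel₀ _ hsne
  have key := hmin t 0
  rw [hR, hR] at key
  have hpp : 0 < p₁ * p₂ := mul_pos hp₁ hp₂
  have key2 : a * (1 - (f₁ - f₂)) ^ 2 + b * (1 - (f₂ - f₁)) ^ 2 ≤
      a * (1 - (t - 0)) ^ 2 + b * (1 - (0 - t)) ^ 2 := le_of_mul_le_mul_left key hpp
  set d := f₁ - f₂ with hd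
  have hd2 : f₂ - f₁ = -d := by rw [hd]; ring
  rw [hd2] at key2
  have hsq : s * (d - t) ^ 2 ≤ 0 := by nlinarith [key2, hts]
  have h0 : (d - t) ^ 2 = 0 := by nlinarith [sq_nonneg (d - t)]
  have hdt : d = t := by
    have := pow_eq_zero_iff (n := 2) (by norm_num) |>.mp h0
    linarith
  have hab : a - b = ξ₁ - ξ₂ := by ring
  rcases lt_or_gt_of_ne hne with h | h
  · have hdn : d < 0 := by
      rw [hdt, htdef, hab]; exact div_neg_of_neg_of_pos (by linarith) hpos
    rw [Real.sign_of_neg hdn, Real.sign_of_neg (by linarith : ξ₁ - ξ₂ < 0)]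
  · have hdp : 0 < d := by
      rw [hdt, htdef, hab]; exact div_pos (by linarith) hpos
    rw [Real.sign_of_pos hdp, Real.sign_of_pos (by linarith : 0 < ξ₁ - ξ₂)]
end

section
/- Let L₀,…,L_{T-1}: ℝ^d → ℝ be convex, differentiable, nonnegative functions, each with κ-Lipschitz gradient and each attaining minimum value with zero gradient at some point. Generate w₀ = 0 and w_{t+1} = w_t - η∇L_t(w_t) with constant stepsize η ∈ (0, 1/κ). Then for any w* with ‖w*‖ ≤ B, Σ_{t=0}^{T-1} L_t(w_t) - Σ_{t=0}^{T-1} L_t(w*) ≤ (1/(1 - κη)) ( B²/(2η) + κη Σ_{t=0}^{T-1} L_t(w*) ). -/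
open scoped RealInnerProductSpace

section Helpers

variable {E : Type*} [NormedAddCommGroup E] [InnerProductSpace ℝ E] [CompleteSpace E]

lemma line_hasDerivAt {f : E → ℝ} (hf : Differentiable ℝ f) (x u : E) (s : ℝ) :
    HasDerivAt (fun s : ℝ => f (x + s • u)) ⟪gradient f (x + s • u), u⟫ s := by
  have h1 : HasDerivAt (fun s : ℝ => x + s • u) u s := by
    simpa using ((hasDerivAt_id s).smul_const u).const_add x
  have h2 : HasFDerivAt f (InnerProductSpace.toDual ℝ E (gradient f (x + s • u))) (x + s • u) :=
    (hf (x + s • u)).hasGradientAt.hasFDerivAt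
  have := h2.comp_hasDerivAt s h1
  rw [InnerProductSpace.toDual_apply_apply] at this; exact this

lemma convex_grad_lb {f : E → ℝ} (hconv : ConvexOn ℝ Set.univ f)
    (hf : Differentiable ℝ f) (x y : E) :
    f x + ⟪gradient f x, y - x⟫ ≤ f y := by
  set u := y - x
  have hgc : ConvexOn ℝ Set.univ (fun s : ℝ => f (x + s • u)) := by
    have := hconv.comp_affineMap (AffineMap.lineMap x y : ℝ →ᵃ[ℝ] E)
    have heq : (f ∘ (AffineMap.lineMap x y : ℝ →ᵃ[ℝ] E)) = fun s : ℝ => f (x + s • u) := by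
      funext s
      simp [AffineMap.lineMap_apply, u]
      congr 1
      abel
    rw [heq] at this
    simpa using this
  have hd := line_hasDerivAt hf x u 0
  have h01 : (0:ℝ) < 1 := one_pos
  have := hgc.le_slope_of_hasDerivAt (Set.mem_univ (0:ℝ)) (Set.mem_univ (1:ℝ)) h01 hd
  rw [slope_def_field] at this
  simp only [zero_smul, add_zero, one_smul] at this hd ⊢
  have hxy : x + u = y := by simp [u]
  rw [hxy] at this
  have : ⟪gradient f x, u⟫ ≤ f y - f x := by
    simpa [div_one] using this
  linarith

lemma descent_lemma {f : E → ℝ} {κ : ℝ} (hf : Differentiable ℝ f)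
    (hlip : ∀ w w' : E, ‖gradient f w - gradient f w'‖ ≤ κ * ‖w - w'‖) (x y : E) :
    f y ≤ f x + ⟪gradient f x, y - x⟫ + κ / 2 * ‖y - x‖ ^ 2 := by
  set u := y - x with hu
  set c₁ : ℝ := ⟪gradient f x, u⟫ with hc₁
  set c₂ : ℝ := κ * ‖u‖ ^ 2 with hc₂
  set h : ℝ → ℝ := fun s => f (x + s • u) - c₁ * s - c₂ * s ^ 2 / 2 with hh
  have hderiv : ∀ s : ℝ, HasDerivAt h (⟪gradient f (x + s • u), u⟫ - c₁ - c₂ * s) s := by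
    intro s
    have h1 := line_hasDerivAt hf x u s
    have h2 : HasDerivAt (fun s : ℝ => c₁ * s) c₁ s := by
      simpa using (hasDerivAt_id s).const_mul c₁
    have h3 : HasDerivAt (fun s : ℝ => c₂ * s ^ 2 / 2) (c₂ * s) s := by
      have := ((hasDerivAt_pow 2 s).const_mul c₂).div_const 2
      exact this.congr_deriv (by push_cast; ring)
    exact (h1.sub h2).sub h3
  have hmono : AntitoneOn h (Set.Icc 0 1) := by
    apply antitoneOn_of_deriv_nonpos (convex_Icc 0 1)
    · exact Continuous.continuousOn (by
        have : ∀ s, DifferentiableAt ℝ h s := fun s => (hderiv s).differentiableAt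
        exact (Differentiable.continuous this))
    · intro s _
      exact (hderiv s).differentiableAt.differentiableWithinAt
    · intro s hs
      rw [interior_Icc] at hs
      rw [(hderiv s).deriv]
      have hG : ⟪gradient f (x + s • u), u⟫ - c₁ ≤ κ * s * ‖u‖ ^ 2 := by
        have h1 : ⟪gradient f (x + s • u), u⟫ - c₁ = ⟪gradient f (x + s • u) - gradient f x, u⟫ := by
          rw [hc₁, inner_sub_left]
        rw [h1]
        calc ⟪gradient f (x + s • u) - gradient f x, u⟫
            ≤ ‖gradient f (x + s • u) - gradient f x‖ * ‖u‖ := real_inner_le_norm _ _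
          _ ≤ (κ * ‖(x + s • u) - x‖) * ‖u‖ := by
              apply mul_le_mul_of_nonneg_right (hlip _ _) (norm_nonneg _)
          _ = κ * s * ‖u‖ ^ 2 := by
              have : (x + s • u) - x = s • u := by abel
              rw [this, norm_smul, Real.norm_eq_abs, abs_of_pos hs.1]
              ring
      have hcs : c₂ * s = κ * s * ‖u‖ ^ 2 := by rw [hc₂]; ring
      linarith
  have hfin := hmono (Set.left_mem_Icc.2 zero_le_one) (Set.right_mem_Icc.2 zero_le_one) zero_le_one
  have h0 : h 0 = f x := by simp [hh]
  have h1 : h 1 = f y - c₁ - c₂ / 2 := by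
    have hxu : x + u = y := by rw [hu]; abel
    simp only [hh, one_smul, mul_one, one_pow, hxu]
  rw [h0, h1] at hfin
  rw [hc₁, hc₂] at hfin
  linarith

lemma self_bounding {f : E → ℝ} {κ : ℝ} (hκ : 0 < κ) (hf : Differentiable ℝ f)
    (hnonneg : ∀ w, 0 ≤ f w)
    (hlip : ∀ w w' : E, ‖gradient f w - gradient f w'‖ ≤ κ * ‖w - w'‖) (x : E) :
    ‖gradient f x‖ ^ 2 ≤ 2 * κ * f x := by
  set g := gradient f x with hg
  have hd := descent_lemma hf hlip x (x - (1/κ) • g)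
  have h1 : x - (1/κ) • g - x = -((1/κ) • g) := by abel
  rw [h1] at hd
  have h2 : ⟪g, -((1/κ) • g)⟫ = -(1/κ) * ‖g‖ ^ 2 := by
    rw [inner_neg_right, real_inner_smul_right, real_inner_self_eq_norm_sq]
    ring
  have h3 : ‖-((1/κ) • g)‖ ^ 2 = (1/κ)^2 * ‖g‖ ^ 2 := by
    rw [norm_neg, norm_smul, Real.norm_eq_abs, mul_pow, sq_abs]
  rw [h2, h3] at hd
  have h4 := hnonneg (x - (1/κ) • g)
  have hκ' : κ ≠ 0 := ne_of_gt hκ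
  have : 0 ≤ f x - ‖g‖^2 / (2*κ) := by
    have heq : f x + -(1 / κ) * ‖g‖ ^ 2 + κ / 2 * ((1 / κ) ^ 2 * ‖g‖ ^ 2)
        = f x - ‖g‖^2 / (2*κ) := by field_simp; ring
    rw [heq] at hd
    linarith
  have h5 : ‖g‖^2 / (2*κ) ≤ f x := by linarith
  rw [div_le_iff₀ (by positivity : (0:ℝ) < 2*κ)] at h5
  linarith

end Helpers

/-- Regret bound for online gradient descent with constant stepsize η ∈ (0, 1/κ) on
convex, differentiable, nonnegative losses with κ-Lipschitz gradients, each attaining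
its minimum with zero gradient. -/
theorem ogd_regret_bound {d T : ℕ}
    (L : Fin T → EuclideanSpace ℝ (Fin d) → ℝ) (κ : ℝ) (hκ : 0 < κ)
    (hconv : ∀ t, ConvexOn ℝ Set.univ (L t)) (hdiff : ∀ t, Differentiable ℝ (L t))
    (hnonneg : ∀ t w, 0 ≤ L t w)
    (hlip : ∀ t, ∀ w w' : EuclideanSpace ℝ (Fin d),
      ‖gradient (L t) w - gradient (L t) w'‖ ≤ κ * ‖w - w'‖)
    (hattain : ∀ t, ∃ z : EuclideanSpace ℝ (Fin d),
      gradient (L t) z = 0 ∧ ∀ w, L t z ≤ L t w)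
    (η : ℝ) (hη : η ∈ Set.Ioo 0 (1 / κ))
    (w : ℕ → EuclideanSpace ℝ (Fin d)) (hw0 : w 0 = 0)
    (hupd : ∀ t : Fin T, w (t + 1) = w t - η • gradient (L t) (w t))
    (wstar : EuclideanSpace ℝ (Fin d)) (B : ℝ) (hB : ‖wstar‖ ≤ B) :
    ∑ t : Fin T, L t (w t) - ∑ t : Fin T, L t wstar ≤
      (1 / (1 - κ * η)) * (B ^ 2 / (2 * η) + κ * η * ∑ t : Fin T, L t wstar) := by
  obtain ⟨hη0, hη1⟩ := hη
  have hκη : κ * η < 1 := by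
    rw [lt_div_iff₀ hκ] at hη1; linarith [hη1]
  have hc : 0 < 1 - κ * η := by linarith
  set a : ℕ → ℝ := fun n => ‖w n - wstar‖ ^ 2 with ha
  -- per-step inequality
  have hstep : ∀ t : Fin T,
      (1 - κ * η) * L t (w t) - L t wstar ≤ (a t - a (t + 1)) / (2 * η) := by
    intro t
    set g := gradient (L t) (w t) with hg
    have hexp : a (t + 1) = a t - 2 * η * ⟪g, w t - wstar⟫ + η ^ 2 * ‖g‖ ^ 2 := by
      have h1 : w ((t : ℕ) + 1) - wstar = (w t - wstar) - η • g := by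
        rw [hupd t]; abel
      rw [ha]
      simp only
      rw [h1, norm_sub_sq_real]
      rw [real_inner_smul_right, norm_smul, Real.norm_eq_abs, mul_pow, sq_abs,
        real_inner_comm (w (t:ℕ) - wstar) g]
      ring
    have hconvineq : L t (w t) - L t wstar ≤ ⟪g, w t - wstar⟫ := by
      have := convex_grad_lb (hconv t) (hdiff t) (w t) wstar
      have h2 : ⟪g, wstar - w t⟫ = -⟪g, w t - wstar⟫ := by
        rw [← inner_neg_right]; congr 1; abel
      rw [h2] at this
      linarith
    have hsb : ‖g‖ ^ 2 ≤ 2 * κ * L t (w t) :=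
      self_bounding hκ (hdiff t) (hnonneg t) (hlip t) (w t)
    rw [le_div_iff₀ (by positivity : (0:ℝ) < 2 * η)]
    nlinarith [hexp, hconvineq, hsb, sq_nonneg η]
  -- sum up
  have hsum : ∑ t : Fin T, ((1 - κ * η) * L t (w t) - L t wstar)
      ≤ (a 0 - a T) / (2 * η) := by
    calc ∑ t : Fin T, ((1 - κ * η) * L t (w t) - L t wstar)
        ≤ ∑ t : Fin T, (a t - a (t + 1)) / (2 * η) := Finset.sum_le_sum fun t _ => hstep t
      _ = (∑ t : Fin T, (a t - a ((t : ℕ) + 1))) / (2 * η) := by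
          rw [Finset.sum_div]
      _ = (a 0 - a T) / (2 * η) := by
          congr 1
          rw [Fin.sum_univ_eq_sum_range (fun i => a i - a (i + 1))]
          exact Finset.sum_range_sub' a T
  have ha0 : a 0 ≤ B ^ 2 := by
    rw [ha]; simp only [hw0, zero_sub, norm_neg]
    exact pow_le_pow_left₀ (norm_nonneg _) hB 2
  have haT : 0 ≤ a T := sq_nonneg _
  rw [Finset.sum_sub_distrib] at hsum
  rw [← Finset.mul_sum] at hsum
  set S := ∑ t : Fin T, L t (w t) with hS
  set Sstar := ∑ t : Fin T, L t wstar with hSstar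
  have hkey : (1 - κ * η) * S - Sstar ≤ B ^ 2 / (2 * η) := by
    have h1 : (a 0 - a T) / (2 * η) ≤ B ^ 2 / (2 * η) := by
      rw [div_le_div_iff_of_pos_right (by positivity : (0:ℝ) < 2 * η)]
      linarith
    linarith
  rw [div_mul_eq_mul_div, one_mul, le_div_iff₀ hc]
  nlinarith [hkey]
end
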